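/- arXiv:2212.01736 — 2 statements merged into one kernel-verified Lean document; each statement's English description precedes it below -/
import Mathlib

section
/- Let L be a positive integer, let m₁, …, m_L be positive integers, let i ∈ {1, …, L}, let S > 0 be a real number and h ∈ ℂ. If Σ_{i'=i}^{L} m_{i'} ≤ log₂(6·S·|h|²), then 6·2^{m₁+⋯+m_{i−1}}·S·|h|² / (2^{m₁+⋯+m_L} − 1) ≥ 1 (where the exponent m₁+⋯+m_{i−1} is 0 when i = 1); consequently the square root of the left-hand side is at least 1. -/
open Finset

/-- The K-user minimum-distance guarantee (38) of the paper: with `L` superimposed users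
of modulation orders `m 0, …, m (L-1)` ordered by decreasing channel gain, if
`Σ_{i' ≥ i} m i' ≤ log₂(6·S·|h|²)` then
`6·2^{Σ_{i' < i} m i'}·S·|h|² / (2^{Σ_{i'} m i'} - 1) ≥ 1`, and hence its square root
is at least 1. -/
theorem min_distance_K_user (L : ℕ) (hL : 0 < L) (m : Fin L → ℕ)
    (hm : ∀ i, 0 < m i) (i : Fin L) (S : ℝ) (hS : 0 < S) (h : ℂ)
    (hcon : ((∑ i' ∈ Finset.univ.filter (fun i' => i ≤ i'), m i' : ℕ) : ℝ) ≤
      Real.logb 2 (6 * S * ‖h‖ ^ 2)) :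
    1 ≤ 6 * 2 ^ (∑ i' ∈ Finset.univ.filter (fun i' => i' < i), m i') * S *
          ‖h‖ ^ 2 / (2 ^ (∑ i', m i') - 1) ∧
    1 ≤ Real.sqrt (6 * 2 ^ (∑ i' ∈ Finset.univ.filter (fun i' => i' < i), m i') * S *
          ‖h‖ ^ 2 / (2 ^ (∑ i', m i') - 1)) := by
  set A : ℕ := ∑ i' ∈ Finset.univ.filter (fun i' => i ≤ i'), m i' with hA
  set B : ℕ := ∑ i' ∈ Finset.univ.filter (fun i' => i' < i), m i' with hB
  set T : ℕ := ∑ i', m i' with hT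
  have hBA : B + A = T := by
    rw [hA, hB, hT]
    rw [← Finset.sum_filter_add_sum_filter_not Finset.univ (fun i' => i' < i) m]
    congr 1
    apply Finset.sum_congr _ (fun _ _ => rfl)
    ext x; simp [not_lt]
  have hApos : 0 < A := by
    have : i ∈ Finset.univ.filter (fun i' => i ≤ i') := by simp
    exact Finset.sum_pos' (fun _ _ => Nat.zero_le _) ⟨i, this, hm i⟩
  -- positivity of the log argument
  have hx : (0:ℝ) < 6 * S * ‖h‖ ^ 2 := by
    by_contra hx
    push_neg at hx
    have h0 : 6 * S * ‖h‖ ^ 2 = 0 := by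
      have : (0:ℝ) ≤ 6 * S * ‖h‖ ^ 2 := by positivity
      linarith
    rw [h0, Real.logb_zero] at hcon
    have : (1:ℝ) ≤ (A:ℝ) := by exact_mod_cast hApos
    linarith
  have hpow : (2:ℝ) ^ A ≤ 6 * S * ‖h‖ ^ 2 := by
    have h1 : ((2:ℝ) ^ (A:ℝ) : ℝ) ≤ (2:ℝ) ^ Real.logb 2 (6 * S * ‖h‖ ^ 2) :=
      Real.rpow_le_rpow_of_exponent_le one_le_two hcon
    rw [Real.rpow_logb (by norm_num) (by norm_num) hx] at h1
    calc (2:ℝ) ^ A = (2:ℝ) ^ (A:ℝ) := by rw [Real.rpow_natCast]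
      _ ≤ _ := h1
  have hTpos : 0 < T := by omega
  have hden : (0:ℝ) < 2 ^ T - 1 := by
    have : (2:ℝ) ^ 0 < 2 ^ T := by
      exact pow_lt_pow_right₀ one_lt_two hTpos
    simpa using this
  have hnum : (2:ℝ) ^ T - 1 ≤ 6 * 2 ^ B * S * ‖h‖ ^ 2 := by
    have h2 : (2:ℝ) ^ T = 2 ^ B * 2 ^ A := by rw [← pow_add, hBA]
    have h3 : (2:ℝ) ^ B * 2 ^ A ≤ 2 ^ B * (6 * S * ‖h‖ ^ 2) :=
      mul_le_mul_of_nonneg_left hpow (by positivity)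
    nlinarith [pow_pos (by norm_num : (0:ℝ) < 2) B]
  have main : 1 ≤ 6 * 2 ^ B * S * ‖h‖ ^ 2 / (2 ^ T - 1) :=
    (one_le_div hden).mpr hnum
  exact ⟨main, Real.one_le_sqrt.mpr main⟩
end

section
/- Let N be a positive integer, let U₁, …, U_N be i.i.d. integrable real random variables with mean I and variance V > 0, and set S = Σ_{j=1}^{N} U_j. Suppose there is a constant B ≥ 0 such that for every λ ∈ ℝ, | P[ (S − N·I)/√(N·V) ≥ λ ] − Q(λ) | ≤ B/√N. Let ε ∈ (0,1), s ∈ (0,1], let M be a real number with M ≥ 2, and let λ ∈ ℝ be such that Q(λ) + B/√N + N^{−s} ≤ ε and log₂((M−1)/2) + s·log₂ N ≤ N·I − √(N·V)·λ. Then E[ 2^{ − max{ 0 , S − log₂((M−1)/2) } } ] ≤ ε. -/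
open MeasureTheory ProbabilityTheory

/-- The Gaussian Q-function `Q(λ) = ∫_λ^∞ (1/√(2π)) e^{-t²/2} dt`. -/
noncomputable def gaussQ (l : ℝ) : ℝ :=
  ∫ t in Set.Ioi l, (Real.sqrt (2 * Real.pi))⁻¹ * Real.exp (-t ^ 2 / 2)

lemma gaussQ_integrable :
    Integrable (fun t : ℝ => (Real.sqrt (2 * Real.pi))⁻¹ * Real.exp (-t ^ 2 / 2)) := by
  have h : ∀ t : ℝ, -t ^ 2 / 2 = -(1/2 : ℝ) * t ^ 2 := by intro t; ring
  simp_rw [h]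
  exact (integrable_exp_neg_mul_sq (by norm_num)).const_mul _

lemma gaussQ_total : ∫ t : ℝ, (Real.sqrt (2 * Real.pi))⁻¹ * Real.exp (-t ^ 2 / 2) = 1 := by
  have h : ∀ t : ℝ, -t ^ 2 / 2 = -(1/2 : ℝ) * t ^ 2 := by intro t; ring
  simp_rw [h, integral_const_mul, integral_gaussian]
  rw [div_div_eq_mul_div, div_one, mul_comm Real.pi 2, inv_mul_cancel₀ (by positivity)]

lemma gaussQ_symm (l : ℝ) : gaussQ l + gaussQ (-l) = 1 := by
  have heven : gaussQ (-l)
      = ∫ t in Set.Iic l, (Real.sqrt (2 * Real.pi))⁻¹ * Real.exp (-t ^ 2 / 2) := by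
    rw [gaussQ, ← neg_neg l, ← integral_comp_neg_Ioi]
    simp [neg_neg]
  rw [heven, gaussQ, ← gaussQ_total]
  have := integral_add_compl (measurableSet_Ioi (a := l)) gaussQ_integrable (μ := volume)
  rw [Set.compl_Ioi] at this
  exact this

/-- The quantitative core of Proposition 1 of the paper: for i.i.d. information
densities `U 1, …, U N` with mean `I` and variance `V > 0` satisfying a Berry–Esseen
bound with constant `B`, and any `ε ∈ (0,1)`, `s ∈ (0,1]`, codebook size `M ≥ 2` and
`λ` with `Q(λ) + B/√N + N^{-s} ≤ ε` and
`log₂((M-1)/2) + s·log₂ N ≤ N·I - √(N·V)·λ`, the dependence-testing expression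
satisfies `E[2^{-max{0, S - log₂((M-1)/2)}}] ≤ ε` where `S = Σ_j U j`. -/
theorem second_order_rate_iid {Ω : Type*} [MeasurableSpace Ω]
    (μ : Measure Ω) [IsProbabilityMeasure μ]
    (N : ℕ) (hN : 0 < N) (U : Fin N → Ω → ℝ)
    (hmeas : ∀ j, Measurable (U j))
    (hint : ∀ j, Integrable (U j) μ)
    (hindep : iIndepFun U μ)
    (hident : ∀ j j', IdentDistrib (U j) (U j') μ μ)
    (I V : ℝ) (hV : 0 < V)
    (hmean : ∀ j, ∫ ω, U j ω ∂μ = I)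
    (hvar : ∀ j, variance (U j) μ = V)
    (B : ℝ) (hB : 0 ≤ B)
    (hBE : ∀ l : ℝ,
      |(μ {ω | ((∑ j, U j ω) - N * I) / Real.sqrt (N * V) ≥ l}).toReal - gaussQ l| ≤
        B / Real.sqrt N)
    (ε : ℝ) (hε0 : 0 < ε) (hε1 : ε < 1)
    (s : ℝ) (hs0 : 0 < s) (hs1 : s ≤ 1)
    (M : ℝ) (hM : 2 ≤ M)
    (l : ℝ)
    (hl1 : gaussQ l + B / Real.sqrt N + (N : ℝ) ^ (-s) ≤ ε)
    (hl2 : Real.logb 2 ((M - 1) / 2) + s * Real.logb 2 N ≤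
      N * I - Real.sqrt (N * V) * l) :
    ∫ ω, (2 : ℝ) ^ (-(max 0 ((∑ j, U j ω) - Real.logb 2 ((M - 1) / 2)))) ∂μ ≤ ε := by
  set γ := Real.logb 2 ((M - 1) / 2) with hγ
  set c := s * Real.logb 2 N with hcdef
  set S := fun ω => ∑ j, U j ω with hSdef
  have hSmeas : Measurable S := Finset.measurable_sum _ fun j _ => hmeas j
  have hN1 : (1 : ℝ) ≤ (N : ℝ) := by exact_mod_cast hN
  have hc0 : 0 ≤ c := mul_nonneg hs0.le (Real.logb_nonneg one_lt_two hN1)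
  have hNs : (N : ℝ) ^ (-s) = (2 : ℝ) ^ (-c) := by
    rw [hcdef, ← neg_mul, mul_comm, Real.rpow_mul (by norm_num),
      Real.rpow_logb two_pos (by norm_num) (by positivity)]
  have hNspos : 0 ≤ (N : ℝ) ^ (-s) := Real.rpow_nonneg (by positivity) _
  set A : Set Ω := {ω | S ω < γ + c} with hAdef
  have hA : MeasurableSet A := measurableSet_lt hSmeas measurable_const
  -- pointwise bound
  have hpt : ∀ ω, (2 : ℝ) ^ (-(max 0 (S ω - γ))) ≤
      A.indicator (fun _ => (1 : ℝ)) ω + (N : ℝ) ^ (-s) := by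
    intro ω
    by_cases h : ω ∈ A
    · rw [Set.indicator_of_mem h]
      have h1 : (2 : ℝ) ^ (-(max 0 (S ω - γ))) ≤ 1 :=
        Real.rpow_le_one_of_one_le_of_nonpos one_le_two
          (neg_nonpos.mpr (le_max_left _ _))
      linarith
    · rw [Set.indicator_of_notMem h]
      have h' : γ + c ≤ S ω := not_lt.mp h
      have hle : c ≤ max 0 (S ω - γ) := le_max_of_le_right (by linarith)
      have : (2 : ℝ) ^ (-(max 0 (S ω - γ))) ≤ (2 : ℝ) ^ (-c) :=
        Real.rpow_le_rpow_of_exponent_le one_le_two (neg_le_neg hle)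
      rw [hNs]
      linarith
  -- integrability of the dominating function
  have hgint : Integrable
      (fun ω => A.indicator (fun _ => (1 : ℝ)) ω + (N : ℝ) ^ (-s)) μ :=
    ((integrable_const (1 : ℝ)).indicator hA).add (integrable_const _)
  have hfnn : ∀ ω, (0 : ℝ) ≤ (2 : ℝ) ^ (-(max 0 (S ω - γ))) := fun ω =>
    (Real.rpow_pos_of_pos two_pos _).le
  have hstep1 : ∫ ω, (2 : ℝ) ^ (-(max 0 (S ω - γ))) ∂μ ≤
      ∫ ω, (A.indicator (fun _ => (1 : ℝ)) ω + (N : ℝ) ^ (-s)) ∂μ :=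
    integral_mono_of_nonneg (Filter.Eventually.of_forall hfnn) hgint
      (Filter.Eventually.of_forall hpt)
  have hstep2 : ∫ ω, (A.indicator (fun _ => (1 : ℝ)) ω + (N : ℝ) ^ (-s)) ∂μ =
      (μ A).toReal + (N : ℝ) ^ (-s) := by
    rw [integral_add ((integrable_const (1 : ℝ)).indicator hA) (integrable_const _),
      integral_indicator_const (1 : ℝ) hA, integral_const]
    simp [measureReal_def]
  -- the Berry–Esseen estimate
  set E : Set Ω := {ω | (S ω - N * I) / Real.sqrt (N * V) ≥ -l} with hEdef
  have hE : MeasurableSet E :=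
    measurableSet_le measurable_const ((hSmeas.sub_const _).div_const _)
  have hσ : 0 < Real.sqrt (N * V) := Real.sqrt_pos.mpr (by positivity)
  have hsub : A ⊆ Eᶜ := by
    intro ω hω
    have h1 : S ω < γ + c := hω
    have h2 : S ω < N * I - Real.sqrt (N * V) * l := lt_of_lt_of_le h1 hl2
    have h3 : (S ω - N * I) / Real.sqrt (N * V) < -l := by
      rw [div_lt_iff₀ hσ]
      nlinarith
    simp only [hEdef, Set.mem_compl_iff, Set.mem_setOf_eq, ge_iff_le, not_le]
    exact h3
  have hμA : (μ A).toReal ≤ (μ Eᶜ).toReal :=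
    ENNReal.toReal_mono (measure_ne_top μ _) (measure_mono hsub)
  have hcompl : (μ E).toReal + (μ Eᶜ).toReal = 1 := by
    rw [← ENNReal.toReal_add (measure_ne_top μ _) (measure_ne_top μ _),
      measure_add_measure_compl hE, measure_univ, ENNReal.toReal_one]
  have hBE' := hBE (-l)
  have hBEE : |(μ E).toReal - gaussQ (-l)| ≤ B / Real.sqrt N := hBE'
  have hlow : gaussQ (-l) - B / Real.sqrt N ≤ (μ E).toReal := by
    have := abs_le.mp hBEE
    linarith [this.1]
  have hsymm : gaussQ (-l) = 1 - gaussQ l := by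
    have := gaussQ_symm l
    linarith
  have hμEc : (μ Eᶜ).toReal ≤ gaussQ l + B / Real.sqrt N := by
    rw [hsymm] at hlow
    linarith
  calc ∫ ω, (2 : ℝ) ^ (-(max 0 (S ω - γ))) ∂μ
      ≤ (μ A).toReal + (N : ℝ) ^ (-s) := by rw [← hstep2]; exact hstep1
    _ ≤ gaussQ l + B / Real.sqrt N + (N : ℝ) ^ (-s) := by linarith
    _ ≤ ε := hl1
end
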